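/- arXiv:1408.3718 — 8 statements merged into one kernel-verified Lean document; each statement's English description precedes it below -/
import Mathlib

section
/- Let (K, v) be an Abelian unital po-group, E = Γ(K, v), and let I be an ideal of E. Then the effect subalgebra of E generated by I equals I ∪ I⁻, where I⁻ = {v − x : x ∈ I}. Precisely: the set I ∪ I⁻ contains v, is closed under the complement x ↦ v − x, is closed under sums x + y with x + y ≤ v, contains I, and is contained in every effect subalgebra of E containing I. -/
open Set

/-! Common vocabulary: interval effect algebras `Γ(K, v) = Set.Icc 0 v` in Abelian
po-groups (`OrderedAddCommGroup`), ideals, decompositions, states, etc., following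
Dvurečenskij, "Lexicographic effect algebras". -/

section Defs

variable {K : Type*} [AddCommGroup K] [PartialOrder K] [IsOrderedAddMonoid K]
variable {H : Type*} [AddCommGroup H] [PartialOrder H] [IsOrderedAddMonoid H]
variable {L : Type*} [AddCommGroup L] [PartialOrder L] [IsOrderedAddMonoid L]

/-- `v` is a strong unit of the po-group `K`. -/
def IsStrongUnit (v : K) : Prop := 0 ≤ v ∧ ∀ g : K, ∃ n : ℕ, g ≤ n • v

/-- The Riesz decomposition property for a po-group. -/
def RDP (K : Type*) [AddCommGroup K] [PartialOrder K] [IsOrderedAddMonoid K] : Prop :=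
  ∀ a₁ a₂ b₁ b₂ : K, 0 ≤ a₁ → 0 ≤ a₂ → 0 ≤ b₁ → 0 ≤ b₂ → a₁ + a₂ = b₁ + b₂ →
    ∃ c₁₁ c₁₂ c₂₁ c₂₂ : K, 0 ≤ c₁₁ ∧ 0 ≤ c₁₂ ∧ 0 ≤ c₂₁ ∧ 0 ≤ c₂₂ ∧
      a₁ = c₁₁ + c₁₂ ∧ a₂ = c₂₁ + c₂₂ ∧ b₁ = c₁₁ + c₂₁ ∧ b₂ = c₁₂ + c₂₂

/-- A poset is an antilattice if any two elements possessing a supremum or an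
infimum are comparable. -/
def IsAntilattice (α : Type*) [PartialOrder α] : Prop :=
  ∀ a b : α, ((∃ c, IsLUB {a, b} c) ∨ (∃ c, IsGLB {a, b} c)) → a ≤ b ∨ b ≤ a

/-- A po-group is directed if any two elements have a common upper bound. -/
def IsDirectedGroup (G : Type*) [AddCommGroup G] [PartialOrder G] [IsOrderedAddMonoid G] : Prop :=
  ∀ a b : G, ∃ c : G, a ≤ c ∧ b ≤ c

/-- An ideal of the interval effect algebra `Γ(K, v)`. -/
def IsIdeal (v : K) (I : Set K) : Prop :=
  I.Nonempty ∧ I ⊆ Icc 0 v ∧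
  (∀ x ∈ Icc (0 : K) v, ∀ y ∈ I, x ≤ y → x ∈ I) ∧
  (∀ x ∈ I, ∀ y ∈ I, x + y ≤ v → x + y ∈ I)

/-- An effect subalgebra of `Γ(K, v)`. -/
def IsEffectSubalgebra (v : K) (F : Set K) : Prop :=
  F ⊆ Icc 0 v ∧ v ∈ F ∧ (∀ x ∈ F, v - x ∈ F) ∧
  ∀ x ∈ F, ∀ y ∈ F, x + y ≤ v → x + y ∈ F

/-- The relation `x ∼_I y`. -/
def SimI (I : Set K) (x y : K) : Prop :=
  ∃ e ∈ I, ∃ f ∈ I, e ≤ x ∧ f ≤ y ∧ x - e = y - f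

/-- `x/I ≤ y/I` in the quotient. -/
def QuotLE (v : K) (I : Set K) (x y : K) : Prop :=
  ∃ x₁ ∈ Icc (0 : K) v, SimI I x₁ x ∧ x₁ ≤ y

/-- `x/I < y/I` in the quotient. -/
def QuotLT (v : K) (I : Set K) (x y : K) : Prop :=
  QuotLE v I x y ∧ ¬ SimI I x y

/-- A strict ideal. -/
def IsStrictIdeal (v : K) (I : Set K) : Prop :=
  IsIdeal v I ∧ ∀ x ∈ Icc (0 : K) v, ∀ y ∈ Icc (0 : K) v, QuotLT v I x y → x < y

/-- The ideal `I₀(a)` of `Γ(K, v)` generated by `a`: all finite sums of elements below `a`. -/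
def IdealGen (v a : K) : Set K :=
  {x | x ∈ Icc 0 v ∧ ∃ l : List K, l ≠ [] ∧ (∀ b ∈ l, b ∈ Icc 0 v ∧ b ≤ a) ∧ l.sum = x}

/-- A prime ideal. -/
def IsPrimeIdeal (v : K) (I : Set K) : Prop :=
  IsIdeal v I ∧
  ∀ x ∈ Icc (0 : K) v, ∀ y ∈ Icc (0 : K) v, IdealGen v x ∩ IdealGen v y ⊆ I → x ∈ I ∨ y ∈ I

/-- A retractive ideal: the canonical projection onto the quotient has a right inverse,
encoded by a map `r : E → E` constant on `∼_I`-classes. -/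
def IsRetractiveIdeal (v : K) (I : Set K) : Prop :=
  IsIdeal v I ∧ ∃ r : K → K,
    (∀ x ∈ Icc (0 : K) v, r x ∈ Icc (0 : K) v) ∧ r v = v ∧
    (∀ x ∈ Icc (0 : K) v, ∀ y ∈ Icc (0 : K) v, x + y ≤ v → r (x + y) = r x + r y) ∧
    (∀ x ∈ Icc (0 : K) v, SimI I (r x) x) ∧
    (∀ x ∈ Icc (0 : K) v, ∀ y ∈ Icc (0 : K) v, SimI I x y → r x = r y)

/-- A lexicographic ideal: a nontrivial ideal that is strict, retractive and prime. -/
def IsLexIdeal (v : K) (I : Set K) : Prop :=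
  IsIdeal v I ∧ I ≠ {0} ∧ I ≠ Icc 0 v ∧
    IsStrictIdeal v I ∧ IsRetractiveIdeal v I ∧ IsPrimeIdeal v I

/-- The set of infinitesimal elements of `Γ(K, v)`. -/
def Infin (v : K) : Set K := {x | x ∈ Icc 0 v ∧ ∀ n : ℕ, n • x ≤ v}

/-- A maximal ideal. -/
def IsMaximalIdeal (v : K) (I : Set K) : Prop :=
  IsIdeal v I ∧ I ≠ Icc 0 v ∧ ∀ J : Set K, IsIdeal v J → I ⊂ J → J = Icc 0 v

/-- A local effect algebra: exactly one maximal ideal. -/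
def IsLocal (v : K) : Prop := ∃! I : Set K, IsMaximalIdeal v I

/-- The radical: the intersection of all maximal ideals. -/
def Rad (v : K) : Set K := ⋂₀ {I : Set K | IsMaximalIdeal v I}

/-- A Riesz ideal. -/
def IsRieszIdeal (v : K) (I : Set K) : Prop :=
  IsIdeal v I ∧ ∀ i ∈ I, ∀ a ∈ Icc (0 : K) v, ∀ b ∈ Icc (0 : K) v, a + b ≤ v → i ≤ a + b →
    ∃ ia ∈ I, ∃ ib ∈ I, ia ≤ a ∧ ib ≤ b ∧ ia + ib ≤ v ∧ i ≤ ia + ib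

/-- A (real-valued) state on `Γ(K, v)`. -/
def IsState (v : K) (s : K → ℝ) : Prop :=
  (∀ x ∈ Icc (0 : K) v, s x ∈ Icc (0 : ℝ) 1) ∧ s v = 1 ∧
  ∀ x ∈ Icc (0 : K) v, ∀ y ∈ Icc (0 : K) v, x + y ≤ v → s (x + y) = s x + s y

/-- `Γ(K, v)` has exactly one state (uniqueness meaning: any two states agree on `Γ(K, v)`). -/
def HasUniqueState (v : K) : Prop :=
  (∃ s : K → ℝ, IsState v s) ∧
  ∀ s s' : K → ℝ, IsState v s → IsState v s' → ∀ x ∈ Icc (0 : K) v, s x = s' x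

/-- An `(H, u)`-decomposition of `Γ(K, v)`. -/
def IsDecomp (v : K) (u : H) (E : H → Set K) : Prop :=
  (∀ t ∈ Icc (0 : H) u, (E t).Nonempty) ∧
  (∀ s ∈ Icc (0 : H) u, ∀ t ∈ Icc (0 : H) u, s ≠ t → E s ∩ E t = ∅) ∧
  (⋃ t ∈ Icc (0 : H) u, E t) = Icc 0 v ∧
  (∀ t ∈ Icc (0 : H) u, (fun x => v - x) '' E t = E (u - t)) ∧
  (∀ s ∈ Icc (0 : H) u, ∀ t ∈ Icc (0 : H) u, ∀ x ∈ E s, ∀ y ∈ E t, x + y ≤ v →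
    s + t ≤ u ∧ x + y ∈ E (s + t))

/-- An ordered `(H, u)`-decomposition. -/
def IsOrderedDecomp (v : K) (u : H) (E : H → Set K) : Prop :=
  IsDecomp v u E ∧
  ∀ s ∈ Icc (0 : H) u, ∀ t ∈ Icc (0 : H) u, s < t → ∀ x ∈ E s, ∀ y ∈ E t, x < y

/-- A directed `(H, u)`-decomposition. -/
def IsDirectedDecomp (v : K) (u : H) (E : H → Set K) : Prop :=
  IsDecomp v u E ∧
  ∀ t ∈ Icc (0 : H) u,
    (∀ x ∈ E t, ∀ y ∈ E t, ∃ z ∈ E t, x ≤ z ∧ y ≤ z) ∧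
    (∀ x ∈ E t, ∀ y ∈ E t, ∃ z ∈ E t, z ≤ x ∧ z ≤ y)

/-- A strong `(H, u)`-decomposition, with witnessing elements `c t ∈ E t`. -/
def IsStrongDecomp (v : K) (u : H) (E : H → Set K) (c : H → K) : Prop :=
  IsOrderedDecomp v u E ∧ IsDirectedDecomp v u E ∧
  (∀ t ∈ Icc (0 : H) u, c t ∈ E t) ∧
  (∀ s ∈ Icc (0 : H) u, ∀ t ∈ Icc (0 : H) u, s + t ≤ u → c (s + t) = c s + c t) ∧
  c u = v

/-- A strong `(H, u)`-perfect effect algebra. -/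
def IsStrongPerfect (v : K) (u : H) : Prop :=
  ∃ (E : H → Set K) (c : H → K), IsStrongDecomp v u E c

/-- A homomorphism of interval effect algebras `Γ(K, v) → Γ(L, w)`. -/
def IsEffectHom (v : K) (w : L) (f : K → L) : Prop :=
  (∀ x ∈ Icc (0 : K) v, f x ∈ Icc (0 : L) w) ∧ f v = w ∧
  ∀ x ∈ Icc (0 : K) v, ∀ y ∈ Icc (0 : K) v, x + y ≤ v →
    f x + f y ≤ w ∧ f (x + y) = f x + f y

/-- An isomorphism of interval effect algebras `Γ(K, v) ≅ Γ(L, w)`. -/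
def IsEffectIso (v : K) (w : L) (f : K → L) : Prop :=
  IsEffectHom v w f ∧ ∃ g : L → K, IsEffectHom w v g ∧
    (∀ x ∈ Icc (0 : K) v, g (f x) = x) ∧ (∀ y ∈ Icc (0 : L) w, f (g y) = y)

/-- An o-ideal of a po-group: a directed convex subgroup. -/
def IsOIdeal (H : Type*) [AddCommGroup H] [PartialOrder H] [IsOrderedAddMonoid H] (S : AddSubgroup H) : Prop :=
  (∀ a ∈ S, ∀ b ∈ S, ∃ c ∈ S, a ≤ c ∧ b ≤ c) ∧
  (∀ a ∈ S, ∀ b ∈ S, ∀ x : H, a ≤ x → x ≤ b → x ∈ S)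

/-- A simple po-group: the only o-ideals are `⊥` and `⊤`. -/
def IsSimplePoGroup (H : Type*) [AddCommGroup H] [PartialOrder H] [IsOrderedAddMonoid H] : Prop :=
  ∀ S : AddSubgroup H, IsOIdeal H S → S = ⊥ ∨ S = ⊤

/-- `Γ(H, u)` is Archimedean: its only infinitesimal element is `0`. -/
def GammaArchimedean (u : H) : Prop :=
  ∀ t ∈ Icc (0 : H) u, (∀ n : ℕ, n • t ≤ u) → t = 0

/-- `φ : K → H` witnesses an isomorphism of the quotient effect algebra `Γ(K,v)/I`
onto `Γ(H, u)`: it is an additive surjection onto `[0,u]` whose fibers on `Γ(K,v)`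
are exactly the `∼_I`-classes, and it transports the quotient order. -/
def QuotIsoWitness (v : K) (I : Set K) (u : H) (φ : K → H) : Prop :=
  (∀ x ∈ Icc (0 : K) v, φ x ∈ Icc (0 : H) u) ∧ φ v = u ∧
  (∀ x ∈ Icc (0 : K) v, ∀ y ∈ Icc (0 : K) v, x + y ≤ v → φ (x + y) = φ x + φ y) ∧
  (∀ t ∈ Icc (0 : H) u, ∃ x ∈ Icc (0 : K) v, φ x = t) ∧
  (∀ x ∈ Icc (0 : K) v, ∀ y ∈ Icc (0 : K) v, (φ x = φ y ↔ SimI I x y)) ∧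
  (∀ x ∈ Icc (0 : K) v, ∀ y ∈ Icc (0 : K) v, (φ x ≤ φ y ↔ QuotLE v I x y))

/-- The quotient effect algebra `Γ(K,v)/I` is isomorphic to `Γ(H, u)`. -/
def IsQuotIso (v : K) (I : Set K) (u : H) : Prop :=
  ∃ φ : K → H, QuotIsoWitness v I u φ

/-- The sub-effect algebra with carrier `S ⊆ Γ(K, v)` and unit `v` is isomorphic
to the interval effect algebra `Γ(L, w)`. -/
def IsSubalgebraIso (v : K) (S : Set K) (w : L) : Prop :=
  ∃ f : K → L,
    (∀ x ∈ S, f x ∈ Icc (0 : L) w) ∧ f v = w ∧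
    (∀ x ∈ S, ∀ y ∈ S, x + y ≤ v → f x + f y ≤ w ∧ f (x + y) = f x + f y) ∧
    ∃ g : L → K,
      (∀ a ∈ Icc (0 : L) w, g a ∈ S) ∧ g w = v ∧
      (∀ a ∈ Icc (0 : L) w, ∀ b ∈ Icc (0 : L) w, a + b ≤ w →
        g a + g b ≤ v ∧ g (a + b) = g a + g b) ∧
      (∀ x ∈ S, g (f x) = x) ∧ (∀ a ∈ Icc (0 : L) w, f (g a) = a)

/-- An `(H, u)`-valued state on `Γ(K, v)`, as a map of subtypes. -/
def IsSubValuedState (v : K) (u : H) (s : Icc (0 : K) v → Icc (0 : H) u) : Prop :=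
  (∀ x : Icc (0 : K) v, (x : K) = v → ((s x : H) = u)) ∧
  (∀ x y z : Icc (0 : K) v, (z : K) = (x : K) + (y : K) →
    ((s z : H) = (s x : H) + (s y : H))) ∧
  Function.Surjective s

/-- An `(H, u)`-decomposition of `Γ(K, v)`, as a family indexed by the subtype `[0,u]`
of sets of the subtype `Γ(K, v)`. -/
def IsSubDecomp (v : K) (u : H) (E : Icc (0 : H) u → Set (Icc (0 : K) v)) : Prop :=
  (∀ t, (E t).Nonempty) ∧
  (∀ s t : Icc (0 : H) u, s ≠ t → E s ∩ E t = ∅) ∧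
  (⋃ t, E t) = Set.univ ∧
  (∀ t t' : Icc (0 : H) u, (t' : H) = u - t →
    ∀ x x' : Icc (0 : K) v, (x' : K) = v - x → (x ∈ E t ↔ x' ∈ E t')) ∧
  (∀ s t : Icc (0 : H) u, ∀ x y z : Icc (0 : K) v, x ∈ E s → y ∈ E t →
    (z : K) = (x : K) + (y : K) →
    ∃ w : Icc (0 : H) u, (w : H) = (s : H) + (t : H) ∧ z ∈ E w)

end Defs

/-- The effect subalgebra of `E = Γ(K, v)` generated by an ideal `I`
is `I ∪ I⁻` where `I⁻ = {v - x : x ∈ I}`. -/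
theorem subalgebra_generated_by_ideal {K : Type*} [AddCommGroup K] [PartialOrder K] [IsOrderedAddMonoid K]
    (v : K) (hv : IsStrongUnit v) (I : Set K) (hI : IsIdeal v I) :
    IsEffectSubalgebra v (I ∪ (fun x => v - x) '' I) ∧
    I ⊆ I ∪ (fun x => v - x) '' I ∧
    ∀ F : Set K, IsEffectSubalgebra v F → I ⊆ F → I ∪ (fun x => v - x) '' I ⊆ F := by
  obtain ⟨hne, hsub, hdown, hadd⟩ := hI
  have h0 : (0 : K) ∈ I := by
    obtain ⟨y, hy⟩ := hne
    exact hdown 0 ⟨le_refl 0, hv.1⟩ y hy (hsub hy).1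
  constructor
  · refine ⟨?_, ?_, ?_, ?_⟩
    · rintro x (hx | ⟨a, ha, rfl⟩)
      · exact hsub hx
      · obtain ⟨ha0, hav⟩ := hsub ha
        exact ⟨by simpa using hav, by simpa using ha0⟩
    · exact Or.inr ⟨0, h0, by simp⟩
    · rintro x (hx | ⟨a, ha, rfl⟩)
      · exact Or.inr ⟨x, hx, rfl⟩
      · exact Or.inl (by simpa using ha)
    · rintro x (hx | ⟨a, ha, rfl⟩) y (hy | ⟨b, hb, rfl⟩) hxy
      · exact Or.inl (hadd x hx y hy hxy)
      · have hxb : x ≤ b := by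
          calc x = x + (v - b) - (v - b) := by abel
            _ ≤ v - (v - b) := sub_le_sub_right hxy _
            _ = b := by abel
        have hmem : b - x ∈ I := by
          refine hdown (b - x) ⟨sub_nonneg.2 hxb,
            (sub_le_self b (hsub hx).1).trans (hsub hb).2⟩ b hb
            (sub_le_self b (hsub hx).1)
        exact Or.inr ⟨b - x, hmem, by dsimp; abel⟩
      · have hya : y ≤ a := by
          calc y = (v - a) + y - (v - a) := by abel
            _ ≤ v - (v - a) := sub_le_sub_right hxy _
            _ = a := by abel
        have hmem : a - y ∈ I := by
          refine hdown (a - y) ⟨sub_nonneg.2 hya,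
            (sub_le_self a (hsub hy).1).trans (hsub ha).2⟩ a ha
            (sub_le_self a (hsub hy).1)
        exact Or.inr ⟨a - y, hmem, by dsimp; abel⟩
      · have hvab : v ≤ a + b := by
          calc v = (v - a) + (v - b) + (a + b - v) := by abel
            _ ≤ v + (a + b - v) := add_le_add_left hxy _
            _ = a + b := by abel
        have hle : a + b - v ≤ a := sub_le_iff_le_add.2 (add_le_add_right (hsub hb).2 a)
        have hmem : a + b - v ∈ I :=
          hdown (a + b - v) ⟨sub_nonneg.2 hvab, hle.trans (hsub ha).2⟩ a ha hle
        exact Or.inr ⟨a + b - v, hmem, by dsimp; abel⟩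
  · refine ⟨Set.subset_union_left, ?_⟩
    rintro F ⟨hFsub, hFv, hFc, hFadd⟩ hIF x (hx | ⟨a, ha, rfl⟩)
    · exact hIF hx
    · exact hFc a (hIF ha)
end

section
/- Let (K, v) be an Abelian unital po-group with RDP and E = Γ(K, v). If I and J are lexicographic ideals of E, then I ⊆ J or J ⊆ I. Moreover, every lexicographic ideal of E is contained in Infin(E), and if some lexicographic ideal of E is a maximal ideal, then E is local. -/
open Set

section Aux

variable {K : Type*} [AddCommGroup K] [PartialOrder K] [IsOrderedAddMonoid K]

lemma zero_mem_ideal {v : K} (hv : 0 ≤ v) {I : Set K} (hI : IsIdeal v I) : 0 ∈ I := by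
  obtain ⟨y, hy⟩ := hI.1
  exact hI.2.2.1 0 ⟨le_refl 0, hv⟩ y hy (hI.2.1 hy).1

/-- In a strict ideal, every element is strictly below every element of `Γ(K,v) \ I`. -/
lemma strict_ideal_lt {v : K} (hv : 0 ≤ v) {I : Set K} (hI : IsStrictIdeal v I)
    {x y : K} (hx : x ∈ I) (hy : y ∈ Icc (0:K) v) (hyI : y ∉ I) : x < y := by
  have h0 : (0:K) ∈ I := zero_mem_ideal hv hI.1
  have hxm : x ∈ Icc (0:K) v := hI.1.2.1 hx
  apply hI.2 x hxm y hy
  constructor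
  · exact ⟨0, ⟨le_refl 0, hv⟩, ⟨0, h0, x, hx, le_refl 0, le_refl x, by simp⟩, hy.1⟩
  · rintro ⟨e, he, f, hf, hex, hfy, heq⟩
    have he0 : 0 ≤ e := (hI.1.2.1 he).1
    have hxe : x - e ∈ I := by
      refine hI.1.2.2.1 (x - e) ⟨sub_nonneg.mpr hex, (sub_le_self x he0).trans hxm.2⟩
        x hx (sub_le_self x he0)
    have hyf : y = f + (x - e) := by rw [heq]; abel
    have : f + (x - e) ∈ I :=
      hI.1.2.2.2 f hf (x - e) hxe (by rw [← hyf]; exact hy.2)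
    exact hyI (hyf ▸ this)

/-- A strict nontrivial ideal is comparable with every ideal. -/
lemma strict_ideal_comparable {v : K} (hv : 0 ≤ v) {I M : Set K}
    (hI : IsStrictIdeal v I) (hM : IsIdeal v M) : I ⊆ M ∨ M ⊆ I := by
  by_cases h : I ⊆ M
  · exact Or.inl h
  · right
    obtain ⟨a, haI, haM⟩ := Set.not_subset.mp h
    intro b hb
    by_contra hbI
    have hab : a < b := strict_ideal_lt hv hI haI (hM.2.1 hb) hbI
    exact haM (hM.2.2.1 a (hI.1.2.1 haI) b hb hab.le)

/-- A strict ideal different from `Γ(K,v)` consists of infinitesimals. -/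
lemma strict_ideal_subset_infin {v : K} (hv : 0 ≤ v) {I : Set K}
    (hI : IsStrictIdeal v I) (hne : I ≠ Icc 0 v) : I ⊆ Infin v := by
  intro x hx
  have hxm : x ∈ Icc (0:K) v := hI.1.2.1 hx
  obtain ⟨z, hz, hzI⟩ : ∃ z, z ∈ Icc (0:K) v ∧ z ∉ I := by
    by_contra h
    push_neg at h
    exact hne (Set.Subset.antisymm hI.1.2.1 h)
  refine ⟨hxm, fun n => ?_⟩
  have key : ∀ n : ℕ, z - n • x ∈ Icc (0:K) v ∧ z - n • x ∉ I := by
    intro n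
    induction n with
    | zero => exact ⟨by simpa using hz, by simpa using hzI⟩
    | succ k ih =>
      have hlt : x < z - k • x := strict_ideal_lt hv hI hx ih.1 ih.2
      have heq : z - (k + 1) • x = (z - k • x) - x := by
        rw [succ_nsmul]; abel
      have hmem : z - (k + 1) • x ∈ Icc (0:K) v := by
        constructor
        · rw [heq]; exact sub_nonneg.mpr hlt.le
        · calc z - (k + 1) • x ≤ z := sub_le_self z (nsmul_nonneg hxm.1 _)
            _ ≤ v := hz.2
      refine ⟨hmem, fun hmemI => ?_⟩
      have : (z - (k + 1) • x) + x ∈ I := by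
        refine hI.1.2.2.2 _ hmemI x hx ?_
        rw [heq]
        calc (z - k • x - x) + x = z - k • x := by abel
          _ ≤ v := ih.1.2
      have heq2 : (z - (k + 1) • x) + x = z - k • x := by rw [heq]; abel
      exact ih.2 (heq2 ▸ this)
  exact le_trans (sub_nonneg.mp (key n).1.1) hz.2

end Aux

/-- Lexicographic ideals of `E = Γ(K, v)` are linearly ordered by
inclusion, each is contained in `Infin E`, and if one of them is maximal then
`E` is local. -/
theorem lexIdeals_linearly_ordered {K : Type*} [AddCommGroup K] [PartialOrder K] [IsOrderedAddMonoid K]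
    (v : K) (hv : IsStrongUnit v) (hK : RDP K) :
    (∀ I J : Set K, IsLexIdeal v I → IsLexIdeal v J → I ⊆ J ∨ J ⊆ I) ∧
    (∀ I : Set K, IsLexIdeal v I → I ⊆ Infin v) ∧
    ((∃ I : Set K, IsLexIdeal v I ∧ IsMaximalIdeal v I) → IsLocal v) := by
  refine ⟨?_, ?_, ?_⟩
  · intro I J hI hJ
    exact strict_ideal_comparable hv.1 hI.2.2.2.1 hJ.1
  · intro I hI
    exact strict_ideal_subset_infin hv.1 hI.2.2.2.1 hI.2.2.1
  · rintro ⟨I, hI, hImax⟩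
    refine ⟨I, hImax, fun M hM => ?_⟩
    rcases strict_ideal_comparable hv.1 hI.2.2.2.1 hM.1 with h | h
    · by_contra hne
      exact hM.2.1 (hImax.2.2 M hM.1 (h.ssubset_of_ne fun he => hne he.symm))
    · by_contra hne
      exact hI.2.2.1 (hM.2.2 I hI.1 (h.ssubset_of_ne hne))
end

section
/- Let (H, u) be a nontrivial antilattice Abelian unital po-group with RDP and let G be a nontrivial directed Abelian po-group with RDP. Then I = {(0, g) : g ∈ G, g ≥ 0} is a lexicographic ideal of the interval effect algebra E = Γ(H ×ₗ G, (u, 0)); that is, I is an ideal of E that is strict, retractive and prime, with {0} ≠ I ≠ E. -/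
open Set

section LexHelpers

variable {H G : Type*} [AddCommGroup H] [PartialOrder H] [IsOrderedAddMonoid H] [AddCommGroup G] [PartialOrder G] [IsOrderedAddMonoid G]

private lemma lexle (p q : H ×ₗ G) :
    p ≤ q ↔ (ofLex p).1 < (ofLex q).1 ∨
      ((ofLex p).1 = (ofLex q).1 ∧ (ofLex p).2 ≤ (ofLex q).2) :=
  Prod.Lex.le_iff

private lemma lexlt (p q : H ×ₗ G) :
    p < q ↔ (ofLex p).1 < (ofLex q).1 ∨
      ((ofLex p).1 = (ofLex q).1 ∧ (ofLex p).2 < (ofLex q).2) :=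
  Prod.Lex.lt_iff

private lemma fst_nonneg {x : H ×ₗ G} (hx : 0 ≤ x) : 0 ≤ (ofLex x).1 := by
  rcases (lexle 0 x).1 hx with h | h
  · exact le_of_lt h
  · exact le_of_eq h.1

private lemma snd_nonneg_of_fst_zero {x : H ×ₗ G} (hx : 0 ≤ x)
    (h : (ofLex x).1 = 0) : 0 ≤ (ofLex x).2 := by
  rcases (lexle 0 x).1 hx with hlt | ⟨_, hle⟩
  · exact absurd h (ne_of_gt hlt)
  · exact hle

/-- RDP implies Riesz interpolation. -/
private lemma rdp_interp {K : Type*} [AddCommGroup K] [PartialOrder K] [IsOrderedAddMonoid K] (hH : RDP K) {a₁ a₂ b₁ b₂ : K}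
    (h11 : a₁ ≤ b₁) (h12 : a₁ ≤ b₂) (h21 : a₂ ≤ b₁) (h22 : a₂ ≤ b₂) :
    ∃ z, a₁ ≤ z ∧ a₂ ≤ z ∧ z ≤ b₁ ∧ z ≤ b₂ := by
  obtain ⟨c11, c12, c21, c22, hc11, hc12, hc21, hc22, e1, e2, e3, e4⟩ :=
    hH (b₁ - a₁) (b₂ - a₂) (b₂ - a₁) (b₁ - a₂)
      (sub_nonneg.2 h11) (sub_nonneg.2 h22) (sub_nonneg.2 h12) (sub_nonneg.2 h21)
      (by abel)
  refine ⟨a₁ + c11, le_add_of_nonneg_right hc11, ?_, ?_, ?_⟩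
  · have key : a₂ + c22 = a₁ + c11 := by
      have h : a₂ - a₁ = c11 - c22 := by
        calc a₂ - a₁ = (b₁ - a₁) - (b₁ - a₂) := by abel
        _ = (c11 + c12) - (c12 + c22) := by rw [e1, e4]
        _ = c11 - c22 := by abel
      have h2 := sub_eq_sub_iff_add_eq_add.mp h
      calc a₂ + c22 = a₂ + c22 := rfl
      _ = a₁ + c11 := by
            have : a₂ + c22 - (a₁ + c11) = 0 := by
              have : a₂ - a₁ - (c11 - c22) = 0 := by rw [h]; abel
              calc a₂ + c22 - (a₁ + c11) = a₂ - a₁ - (c11 - c22) := by abel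
              _ = 0 := this
            have := sub_eq_zero.mp this
            exact this
    calc a₂ ≤ a₂ + c22 := le_add_of_nonneg_right hc22
    _ = a₁ + c11 := key
  · have hb : b₁ = a₁ + (c11 + c12) := by
      have h := sub_eq_iff_eq_add.mp e1
      rw [h]; abel
    rw [hb]
    exact add_le_add_right (le_add_of_nonneg_right hc12) a₁
  · have hb : b₂ = a₁ + (c11 + c21) := by
      have h := sub_eq_iff_eq_add.mp e3
      rw [h]; abel
    rw [hb]
    exact add_le_add_right (le_add_of_nonneg_right hc21) a₁

/-- In an antilattice with RDP, two strictly positive elements have a strictly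
positive common lower bound. -/
private lemma pos_meet {K : Type*} [AddCommGroup K] [PartialOrder K] [IsOrderedAddMonoid K] (hH : RDP K)
    (hanti : IsAntilattice K) {h h' : K}
    (h0 : 0 < h) (h0' : 0 < h') : ∃ t : K, 0 < t ∧ t ≤ h ∧ t ≤ h' := by
  by_contra hc
  push_neg at hc
  have hz : ∀ t : K, 0 ≤ t → t ≤ h → t ≤ h' → t = 0 := by
    intro t ht h1 h2
    rcases ht.lt_or_eq with hlt | heq
    · exact absurd h2 (hc t hlt h1)
    · exact heq.symm
  have hinf : IsGLB {h, h'} (0 : K) := by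
    constructor
    · rintro w (rfl | hw)
      · exact h0.le
      · rcases hw with rfl; exact h0'.le
    · intro w hw
      have hwh : w ≤ h := hw (by simp)
      have hwh' : w ≤ h' := hw (by simp)
      obtain ⟨z, hz1, hz2, hz3, hz4⟩ := rdp_interp hH h0.le h0'.le hwh hwh'
      exact hz2.trans_eq (hz z hz1 hz3 hz4)
  have := hanti h h' (Or.inr ⟨0, hinf⟩)
  rcases this with hle | hle
  · exact absurd (hz h h0.le le_rfl hle) h0.ne'
  · exact absurd (hz h' h0'.le hle le_rfl) h0'.ne'

private lemma unit_pos {K : Type*} [AddCommGroup K] [PartialOrder K] [IsOrderedAddMonoid K] [Nontrivial K]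
    {u : K} (hu : IsStrongUnit u) : 0 < u := by
  rcases hu with ⟨h0, hs⟩
  rcases h0.lt_or_eq with h | h
  · exact h
  · exfalso
    obtain ⟨g, hg⟩ := exists_ne (0 : K)
    have h1 : g ≤ 0 := by
      obtain ⟨n, hn⟩ := hs g
      rw [← h, smul_zero] at hn; exact hn
    have h2 : -g ≤ 0 := by
      obtain ⟨n, hn⟩ := hs (-g)
      rw [← h, smul_zero] at hn; exact hn
    exact hg (le_antisymm h1 (neg_nonpos.mp h2))

private lemma directed_down {K : Type*} [AddCommGroup K] [PartialOrder K] [IsOrderedAddMonoid K]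
    (hG : IsDirectedGroup K) (a b : K) : ∃ c, c ≤ a ∧ c ≤ b := by
  obtain ⟨c, h1, h2⟩ := hG (-a) (-b)
  exact ⟨-c, neg_le.mp (by simpa using h1), neg_le.mp (by simpa using h2)⟩

private lemma exists_pos_ne {K : Type*} [AddCommGroup K] [PartialOrder K] [IsOrderedAddMonoid K] [Nontrivial K]
    (hG : IsDirectedGroup K) : ∃ g : K, 0 ≤ g ∧ g ≠ 0 := by
  obtain ⟨a, ha⟩ := exists_ne (0 : K)
  obtain ⟨c, h1, h2⟩ := hG a 0
  rcases eq_or_ne c 0 with rfl | hc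
  · exact ⟨-a, neg_nonneg.2 h1, by simpa using ha⟩
  · exact ⟨c, h2, hc⟩

private lemma simI_fst_eq {I : Set (H ×ₗ G)} (hI : ∀ p ∈ I, (ofLex p).1 = 0)
    {x y : H ×ₗ G} (h : SimI I x y) : (ofLex x).1 = (ofLex y).1 := by
  obtain ⟨e, he, f, hf, _, _, hxy⟩ := h
  have h2 : (ofLex x).1 - (ofLex e).1 = (ofLex y).1 - (ofLex f).1 :=
    congrArg (fun p => (ofLex p).1) hxy
  rw [hI e he, hI f hf, sub_zero, sub_zero] at h2
  exact h2

private lemma fst_eq_simI {u : H} (hG : IsDirectedGroup G)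
    {x y : H ×ₗ G} (hx : x ∈ Icc 0 (toLex (u, (0 : G))))
    (hy : y ∈ Icc 0 (toLex (u, (0 : G))))
    (h : (ofLex x).1 = (ofLex y).1) :
    SimI {p : H ×ₗ G | (ofLex p).1 = 0 ∧ 0 ≤ (ofLex p).2} x y := by
  rcases eq_or_ne (ofLex x).1 0 with h0 | h0
  · refine ⟨x, ⟨h0, snd_nonneg_of_fst_zero hx.1 h0⟩,
      y, ⟨h ▸ h0, snd_nonneg_of_fst_zero hy.1 (h ▸ h0)⟩, le_rfl, le_rfl, by
        rw [sub_self, sub_self]⟩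
  · have hpos : 0 < (ofLex x).1 := (fst_nonneg hx.1).lt_of_ne (Ne.symm h0)
    obtain ⟨c, hc1, hc2⟩ := hG 0 ((ofLex x).2 - (ofLex y).2)
    refine ⟨toLex (0, c), ⟨rfl, hc1⟩,
      toLex (0, c - ((ofLex x).2 - (ofLex y).2)), ⟨rfl, sub_nonneg.2 hc2⟩, ?_, ?_, ?_⟩
    · exact (lexle _ _).2 (Or.inl hpos)
    · exact (lexle _ _).2 (Or.inl (h ▸ hpos))
    · have hpair : ((ofLex x).1 - 0, (ofLex x).2 - c) =
          ((ofLex y).1 - 0, (ofLex y).2 - (c - ((ofLex x).2 - (ofLex y).2))) := by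
        refine Prod.ext ?_ ?_
        · simpa using h
        · show (ofLex x).2 - c = (ofLex y).2 - (c - ((ofLex x).2 - (ofLex y).2))
          abel
      exact congrArg toLex hpair

private lemma mem_idealGen {K : Type*} [AddCommGroup K] [PartialOrder K] [IsOrderedAddMonoid K] {v a z : K}
    (hz : z ∈ Icc 0 v) (hza : z ≤ a) : z ∈ IdealGen v a := by
  refine ⟨hz, [z], by simp, ?_, by simp⟩
  intro b hb
  rw [List.mem_singleton] at hb
  subst hb
  exact ⟨hz, hza⟩

end LexHelpers

/-- For a nontrivial antilattice Abelian unital po-group `(H, u)` with RDP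
and a nontrivial directed Abelian po-group `G` with RDP, the set
`I = {(0, g) : g ∈ G⁺}` is a lexicographic ideal of `E = Γ(H ×ₗ G, (u, 0))`. -/
theorem zero_cone_is_lexIdeal {H G : Type*} [AddCommGroup H] [PartialOrder H] [IsOrderedAddMonoid H] [AddCommGroup G] [PartialOrder G] [IsOrderedAddMonoid G]
    [Nontrivial H] [Nontrivial G] (u : H) (hu : IsStrongUnit u) (hH : RDP H)
    (hanti : IsAntilattice H) (hG : IsDirectedGroup G) (hRG : RDP G) :
    IsLexIdeal (toLex (u, (0 : G)))
      {p : H ×ₗ G | (ofLex p).1 = 0 ∧ 0 ≤ (ofLex p).2} := by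
  have hu0 : 0 < u := unit_pos hu
  set v : H ×ₗ G := toLex (u, (0 : G)) with hv
  set I : Set (H ×ₗ G) := {p : H ×ₗ G | (ofLex p).1 = 0 ∧ 0 ≤ (ofLex p).2} with hIdef
  have hfstI : ∀ p ∈ I, (ofLex p).1 = 0 := fun p hp => hp.1
  have hIsubE : I ⊆ Icc 0 v := by
    intro p hp
    refine ⟨(lexle 0 p).2 (Or.inr ⟨hp.1.symm, hp.2⟩), (lexle p v).2 (Or.inl ?_)⟩
    rw [hp.1]; exact hu0
  have hIdeal : IsIdeal v I := by
    refine ⟨⟨0, rfl, le_rfl⟩, hIsubE, ?_, ?_⟩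
    · intro x hx y hy hxy
      have hfx : 0 ≤ (ofLex x).1 := fst_nonneg hx.1
      rcases (lexle x y).1 hxy with hlt | ⟨heq, _⟩
      · rw [hy.1] at hlt
        exact absurd (hfx.trans_lt hlt) (lt_irrefl _)
      · have h0 : (ofLex x).1 = 0 := heq.trans hy.1
        exact ⟨h0, snd_nonneg_of_fst_zero hx.1 h0⟩
    · intro x hx y hy _
      refine ⟨?_, add_nonneg hx.2 hy.2⟩
      show (ofLex x).1 + (ofLex y).1 = 0
      rw [hx.1, hy.1, add_zero]
  refine ⟨hIdeal, ?_, ?_, ⟨hIdeal, ?_⟩, ⟨hIdeal, ?_⟩, hIdeal, ?_⟩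
  · -- I ≠ {0}
    obtain ⟨g, hg0, hgne⟩ := exists_pos_ne hG
    intro heq
    have hmem : toLex ((0 : H), g) ∈ I := ⟨rfl, hg0⟩
    rw [heq] at hmem
    exact hgne (congrArg (fun p => (ofLex p).2) (Set.mem_singleton_iff.mp hmem))
  · -- I ≠ Icc 0 v
    intro heq
    have hvmem : v ∈ Icc 0 v := ⟨(lexle 0 v).2 (Or.inl hu0), le_rfl⟩
    rw [← heq] at hvmem
    exact hu0.ne' hvmem.1
  · -- strict
    rintro x hx y hy ⟨⟨x₁, _, hsim, hle⟩, hnsim⟩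
    have h1 : (ofLex x₁).1 = (ofLex x).1 := simI_fst_eq hfstI hsim
    have h2 : (ofLex x).1 ≠ (ofLex y).1 := fun he => hnsim (fst_eq_simI hG hx hy he)
    have h3 : (ofLex x).1 < (ofLex y).1 := by
      rcases (lexle x₁ y).1 hle with hlt | ⟨heq, _⟩
      · rw [← h1]; exact hlt
      · exact absurd (h1.symm.trans heq) h2
    exact (lexlt x y).2 (Or.inl h3)
  · -- retractive
    refine ⟨fun p => toLex ((ofLex p).1, 0), ?_, rfl, ?_, ?_, ?_⟩
    · intro x hx
      constructor
      · rcases (lexle 0 x).1 hx.1 with hlt | ⟨heq, _⟩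
        · exact (lexle _ _).2 (Or.inl hlt)
        · exact (lexle _ _).2 (Or.inr ⟨heq, le_rfl⟩)
      · rcases (lexle x v).1 hx.2 with hlt | ⟨heq, _⟩
        · exact (lexle _ _).2 (Or.inl hlt)
        · exact (lexle _ _).2 (Or.inr ⟨heq, le_rfl⟩)
    · intro x _ y _ _
      show toLex ((ofLex x).1 + (ofLex y).1, (0 : G)) =
        toLex ((ofLex x).1 + (ofLex y).1, (0 : G) + (0 : G))
      rw [add_zero]
    · intro x hx
      have hrE : toLex ((ofLex x).1, (0 : G)) ∈ Icc 0 v := by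
        constructor
        · rcases (lexle 0 x).1 hx.1 with hlt | ⟨heq, _⟩
          · exact (lexle _ _).2 (Or.inl hlt)
          · exact (lexle _ _).2 (Or.inr ⟨heq, le_rfl⟩)
        · rcases (lexle x v).1 hx.2 with hlt | ⟨heq, _⟩
          · exact (lexle _ _).2 (Or.inl hlt)
          · exact (lexle _ _).2 (Or.inr ⟨heq, le_rfl⟩)
      exact fst_eq_simI hG hrE hx rfl
    · intro x _ y _ hsim
      have h1 := simI_fst_eq hfstI hsim
      show toLex ((ofLex x).1, (0 : G)) = toLex ((ofLex y).1, (0 : G))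
      rw [h1]
  · -- prime
    intro x hx y hy hsub
    by_contra hcon
    push_neg at hcon
    obtain ⟨hxI, hyI⟩ := hcon
    have hxf : 0 < (ofLex x).1 := by
      rcases (fst_nonneg hx.1).lt_or_eq with h | h
      · exact h
      · exact absurd ⟨h.symm, snd_nonneg_of_fst_zero hx.1 h.symm⟩ hxI
    have hyf : 0 < (ofLex y).1 := by
      rcases (fst_nonneg hy.1).lt_or_eq with h | h
      · exact h
      · exact absurd ⟨h.symm, snd_nonneg_of_fst_zero hy.1 h.symm⟩ hyI
    obtain ⟨t, ht0, htx, hty⟩ := pos_meet hH hanti hxf hyf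
    obtain ⟨s₁, h11, h12⟩ := directed_down hG (ofLex x).2 (ofLex y).2
    obtain ⟨s, h21, h22⟩ := directed_down hG s₁ (0 : G)
    have hsx : s ≤ (ofLex x).2 := h21.trans h11
    have hsy : s ≤ (ofLex y).2 := h21.trans h12
    have hxu : (ofLex x).1 ≤ u := by
      rcases (lexle x v).1 hx.2 with h | ⟨h, _⟩
      · exact h.le
      · exact le_of_eq h
    have hzE : toLex (t, s) ∈ Icc 0 v := by
      refine ⟨(lexle _ _).2 (Or.inl ht0), ?_⟩
      rcases (htx.trans hxu).lt_or_eq with h | h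
      · exact (lexle _ _).2 (Or.inl h)
      · exact (lexle _ _).2 (Or.inr ⟨h, h22⟩)
    have hzx : toLex (t, s) ≤ x := by
      rcases htx.lt_or_eq with h | h
      · exact (lexle _ _).2 (Or.inl h)
      · exact (lexle _ _).2 (Or.inr ⟨h, hsx⟩)
    have hzy : toLex (t, s) ≤ y := by
      rcases hty.lt_or_eq with h | h
      · exact (lexle _ _).2 (Or.inl h)
      · exact (lexle _ _).2 (Or.inr ⟨h, hsy⟩)
    have hmem := hsub ⟨mem_idealGen hzE hzx, mem_idealGen hzE hzy⟩
    exact ht0.ne' hmem.1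
end

section
/- Let (K, v) be an Abelian unital po-group, E = Γ(K, v), and let (H, u) be an Abelian unital po-group. Then E admits an (H, u)-valued state if and only if E admits an (H, u)-decomposition. Moreover, the assignment sending an (H, u)-decomposition (E_t : t ∈ [0,u]_H) to the map s with s(x) = t iff x ∈ E_t is a bijection between the set of all (H, u)-decompositions of E and the set of all (H, u)-valued states on E. -/
open Set

section AuxProof

variable {K H : Type*} [AddCommGroup K] [PartialOrder K] [IsOrderedAddMonoid K] [AddCommGroup H] [PartialOrder H] [IsOrderedAddMonoid H] {v : K} {u : H}

lemma subDecomp_existsUnique {E : Icc (0 : H) u → Set (Icc (0 : K) v)}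
    (hE : IsSubDecomp v u E) (x : Icc (0 : K) v) : ∃! t, x ∈ E t := by
  obtain ⟨hne, hdisj, huniv, hcompl, hadd⟩ := hE
  have hx : x ∈ ⋃ t, E t := huniv ▸ Set.mem_univ x
  obtain ⟨t, ht⟩ := Set.mem_iUnion.1 hx
  refine ⟨t, ht, fun t' ht' => ?_⟩
  by_contra h
  have := hdisj t' t h
  have hmem : x ∈ E t' ∩ E t := ⟨ht', ht⟩
  rw [this] at hmem
  exact hmem

/-- The state associated to a decomposition. -/
noncomputable def decompToState (E : Icc (0 : H) u → Set (Icc (0 : K) v))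
    (hE : IsSubDecomp v u E) : Icc (0 : K) v → Icc (0 : H) u :=
  fun x => (subDecomp_existsUnique hE x).exists.choose

lemma decompToState_mem (E : Icc (0 : H) u → Set (Icc (0 : K) v))
    (hE : IsSubDecomp v u E) (x : Icc (0 : K) v) : x ∈ E (decompToState E hE x) :=
  (subDecomp_existsUnique hE x).exists.choose_spec

lemma decompToState_mem_iff (E : Icc (0 : H) u → Set (Icc (0 : K) v))
    (hE : IsSubDecomp v u E) (x : Icc (0 : K) v) (t : Icc (0 : H) u) :
    x ∈ E t ↔ decompToState E hE x = t := by
  constructor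
  · intro ht
    exact ((subDecomp_existsUnique hE x).unique (decompToState_mem E hE x) ht)
  · rintro rfl
    exact decompToState_mem E hE x

lemma decompToState_isState (E : Icc (0 : H) u → Set (Icc (0 : K) v))
    (hE : IsSubDecomp v u E) : IsSubValuedState v u (decompToState E hE) := by
  obtain ⟨hne, hdisj, huniv, hcompl, hadd⟩ := id hE
  set s := decompToState E hE with hs
  have hmem : ∀ x, x ∈ E (s x) := decompToState_mem E hE
  have hmemiff := decompToState_mem_iff E hE
  -- additivity
  have haddS : ∀ x y z : Icc (0 : K) v, (z : K) = (x : K) + (y : K) →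
      ((s z : H) = (s x : H) + (s y : H)) := by
    intro x y z hz
    obtain ⟨w, hw, hzw⟩ := hadd (s x) (s y) x y z (hmem x) (hmem y) hz
    have : s z = w := (hmemiff z w).1 hzw
    rw [this, hw]
  refine ⟨?_, haddS, ?_⟩
  · -- s v = u
    intro x hx
    have h0v : (0 : K) ≤ v := x.2.1.trans x.2.2
    set z0 : Icc (0 : K) v := ⟨0, le_rfl, h0v⟩ with hz0
    have h00 : (s z0 : H) = (s z0 : H) + (s z0 : H) := by
      refine haddS z0 z0 z0 ?_
      simp [hz0]
    have hsz0 : (s z0 : H) = 0 := add_eq_left.mp h00.symm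
    have h0u : (0 : H) ≤ u := (s z0).2.1.trans (s z0).2.2
    set tu : Icc (0 : H) u := ⟨u, h0u, le_rfl⟩ with htu
    have hcond : (tu : H) = u - (s z0 : H) := by rw [hsz0]; simp [htu]
    have hx' : (x : K) = v - (z0 : K) := by simp [hx, hz0]
    have := (hcompl (s z0) tu hcond z0 x hx').1 (hmem z0)
    have hst : s x = tu := (hmemiff x tu).1 this
    rw [hst]
  · -- surjective
    intro t
    obtain ⟨x, hx⟩ := hne t
    exact ⟨x, (hmemiff x t).1 hx⟩

/-- The decomposition associated to a state. -/
def stateToDecomp (s : Icc (0 : K) v → Icc (0 : H) u) :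
    Icc (0 : H) u → Set (Icc (0 : K) v) := fun t => s ⁻¹' {t}

lemma stateToDecomp_isDecomp (s : Icc (0 : K) v → Icc (0 : H) u)
    (hsx : IsSubValuedState v u s) : IsSubDecomp v u (stateToDecomp s) := by
  obtain ⟨hunit, hadd, hsurj⟩ := hsx
  refine ⟨?_, ?_, ?_, ?_, ?_⟩
  · intro t
    obtain ⟨x, hx⟩ := hsurj t
    exact ⟨x, hx⟩
  · intro t t' h
    ext x
    simp only [stateToDecomp, Set.mem_inter_iff, Set.mem_preimage, Set.mem_singleton_iff,
      Set.mem_empty_iff_false, iff_false]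
    rintro ⟨h1, h2⟩
    exact h (h1 ▸ h2 ▸ rfl)
  · ext x
    simp only [Set.mem_iUnion, Set.mem_univ, iff_true]
    exact ⟨s x, rfl⟩
  · intro t t' ht' x x' hx'
    have h0v : (0 : K) ≤ v := x.2.1.trans x.2.2
    set zv : Icc (0 : K) v := ⟨v, h0v, le_rfl⟩ with hzv
    have hzsum : (zv : K) = (x : K) + (x' : K) := by simp [hzv, hx']
    have h1 : (s zv : H) = (s x : H) + (s x' : H) := hadd x x' zv hzsum
    have h2 : (s zv : H) = u := hunit zv rfl
    have h3 : (s x' : H) = u - (s x : H) :=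
      eq_sub_of_add_eq (by rw [add_comm, ← h1, h2])
    simp only [stateToDecomp, Set.mem_preimage, Set.mem_singleton_iff]
    constructor
    · rintro rfl
      apply Subtype.ext
      rw [h3, ht']
    · intro h
      apply Subtype.ext
      have : (s x' : H) = (t' : H) := by rw [h]
      rw [h3, ht'] at this
      exact (sub_right_injective this)
  · intro a b x y z hx hy hz
    simp only [stateToDecomp, Set.mem_preimage, Set.mem_singleton_iff] at hx hy
    refine ⟨s z, ?_, rfl⟩
    rw [hadd x y z hz, hx, hy]

end AuxProof

/-- `E = Γ(K, v)` admits an `(H, u)`-valued state iff it admits an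
`(H, u)`-decomposition, and the assignment sending a decomposition
`(E_t : t ∈ [0,u]_H)` to the state `s` with `s x = t ↔ x ∈ E_t` is a bijection
between the set of `(H, u)`-decompositions and the set of `(H, u)`-valued states. -/
theorem valuedState_iff_decomposition {K H : Type*}
    [AddCommGroup K] [PartialOrder K] [IsOrderedAddMonoid K] [AddCommGroup H] [PartialOrder H] [IsOrderedAddMonoid H]
    (v : K) (u : H) (hv : IsStrongUnit v) (hu : IsStrongUnit u) :
    ((∃ s : Icc (0 : K) v → Icc (0 : H) u, IsSubValuedState v u s) ↔
      (∃ E : Icc (0 : H) u → Set (Icc (0 : K) v), IsSubDecomp v u E)) ∧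
    ∃ F : {E : Icc (0 : H) u → Set (Icc (0 : K) v) // IsSubDecomp v u E} →
          {s : Icc (0 : K) v → Icc (0 : H) u // IsSubValuedState v u s},
      (∀ D : {E : Icc (0 : H) u → Set (Icc (0 : K) v) // IsSubDecomp v u E},
        ∀ (t : Icc (0 : H) u) (x : Icc (0 : K) v), x ∈ D.1 t ↔ (F D).1 x = t) ∧
      Function.Bijective F := by
  classical
  constructor
  · constructor
    · rintro ⟨s, hs⟩
      exact ⟨stateToDecomp s, stateToDecomp_isDecomp s hs⟩
    · rintro ⟨E, hE⟩
      exact ⟨decompToState E hE, decompToState_isState E hE⟩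
  · refine ⟨fun D => ⟨decompToState D.1 D.2, decompToState_isState D.1 D.2⟩, ?_, ?_, ?_⟩
    · intro D t x
      exact decompToState_mem_iff D.1 D.2 x t
    · -- injective
      rintro ⟨E, hE⟩ ⟨E', hE'⟩ h
      have hfun : decompToState E hE = decompToState E' hE' := congrArg Subtype.val h
      apply Subtype.ext
      funext t
      ext x
      rw [decompToState_mem_iff E hE x t, decompToState_mem_iff E' hE' x t, hfun]
    · -- surjective
      rintro ⟨s, hs⟩
      refine ⟨⟨stateToDecomp s, stateToDecomp_isDecomp s hs⟩, ?_⟩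
      apply Subtype.ext
      funext x
      have : x ∈ stateToDecomp s (s x) := rfl
      exact (decompToState_mem_iff (stateToDecomp s) (stateToDecomp_isDecomp s hs) x (s x)).1 this
end

section
/- Let (K, v) and (H, u) be Abelian unital po-groups and let (E_t : t ∈ [0,u]_H) be an (H, u)-decomposition of E = Γ(K, v). Then (E_t) is ordered if and only if for all w, t ∈ [0,u]_H with w + t < u, every x ∈ E_w and y ∈ E_t satisfy x + y ≤ v. In that case, for all s, t ∈ [0,u]_H with s + t < u one has {x + y : x ∈ E_s, y ∈ E_t} = E_{s+t}, and for all s, t ∈ [0,u]_H with s + t > u, no x ∈ E_s and y ∈ E_t satisfy x + y ≤ v. -/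
open Set

/-- An `(H, u)`-decomposition is ordered iff all sums across indices
`w + t < u` are defined; in that case `E_s + E_t = E_{s+t}` whenever `s + t < u`,
and no sum across indices with `s + t > u` is defined. -/
theorem orderedDecomp_iff_sums_defined {K H : Type*}
    [AddCommGroup K] [PartialOrder K] [IsOrderedAddMonoid K] [AddCommGroup H] [PartialOrder H] [IsOrderedAddMonoid H]
    (v : K) (u : H) (hv : IsStrongUnit v) (hu : IsStrongUnit u)
    (E : H → Set K) (hE : IsDecomp v u E) :
    (IsOrderedDecomp v u E ↔
      ∀ w ∈ Icc (0 : H) u, ∀ t ∈ Icc (0 : H) u, w + t < u →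
        ∀ x ∈ E w, ∀ y ∈ E t, x + y ≤ v) ∧
    (IsOrderedDecomp v u E →
      (∀ s ∈ Icc (0 : H) u, ∀ t ∈ Icc (0 : H) u, s + t < u →
        {z : K | ∃ x ∈ E s, ∃ y ∈ E t, x + y ≤ v ∧ x + y = z} = E (s + t)) ∧
      (∀ s ∈ Icc (0 : H) u, ∀ t ∈ Icc (0 : H) u, u < s + t →
        ∀ x ∈ E s, ∀ y ∈ E t, ¬ x + y ≤ v)) := by
  obtain ⟨h1, h2, h3, h4, h5⟩ := hE
  have hsub : ∀ t ∈ Icc (0:H) u, E t ⊆ Icc (0:K) v := by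
    intro t ht x hx
    rw [← h3]
    exact mem_biUnion ht hx
  have hcov : ∀ x ∈ Icc (0:K) v, ∃ r ∈ Icc (0:H) u, x ∈ E r := by
    intro x hx
    rw [← h3] at hx
    simpa using hx
  have hdisj : ∀ a ∈ Icc (0:H) u, ∀ b ∈ Icc (0:H) u, ∀ z : K, z ∈ E a → z ∈ E b → a = b := by
    intro a ha b hb z hza hzb
    by_contra hne
    have h := h2 a ha b hb hne
    exact absurd (h ▸ (mem_inter hza hzb)) (notMem_empty z)
  have h0 : (0:K) ∈ E 0 := by
    obtain ⟨r, hr, h0r⟩ := hcov 0 ⟨le_refl 0, hv.1⟩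
    have h5' := h5 r hr r hr 0 h0r 0 h0r (by simpa using hv.1)
    have hrr : r + r ∈ Icc (0:H) u := ⟨add_nonneg hr.1 hr.1, h5'.1⟩
    have heq : r = r + r := hdisj r hr (r+r) hrr 0 h0r (by simpa using h5'.2)
    have hr0 : r = 0 := (left_eq_add.mp heq)
    rwa [hr0] at h0r
  constructor
  · constructor
    · rintro ⟨_, hord⟩ w hw t ht hwt x hx y hy
      have huw : u - w ∈ Icc (0:H) u := ⟨sub_nonneg.2 hw.2, sub_le_self u hw.1⟩
      have hvx : v - x ∈ E (u - w) := by
        rw [← h4 w hw]; exact ⟨x, hx, rfl⟩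
      have htlt : t < u - w := lt_sub_iff_add_lt'.2 hwt
      have hlt := hord t ht (u - w) huw htlt y hy (v - x) hvx
      exact (lt_sub_iff_add_lt'.mp hlt).le
    · intro hsums
      refine ⟨⟨h1, h2, h3, h4, h5⟩, ?_⟩
      intro s hs t ht hst x hx y hy
      have hut : u - t ∈ Icc (0:H) u := ⟨sub_nonneg.2 ht.2, sub_le_self u ht.1⟩
      have hvy : v - y ∈ E (u - t) := by
        rw [← h4 t ht]; exact ⟨y, hy, rfl⟩
      have hlt : s + (u - t) < u := by
        have heq : s + (u - t) = u - (t - s) := by abel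
        rw [heq]
        exact sub_lt_self u (sub_pos.2 hst)
      have hle := hsums s hs (u - t) hut hlt x hx (v - y) hvy
      have hxy : x ≤ y := by
        have := le_sub_iff_add_le.mpr hle
        rwa [sub_sub_cancel] at this
      refine lt_of_le_of_ne hxy (fun h => (ne_of_lt hst) ?_)
      exact hdisj s hs t ht x hx (h ▸ hy)
  · rintro ⟨_, hord⟩
    constructor
    · intro s hs t ht hstu
      have hstm : s + t ∈ Icc (0:H) u := ⟨add_nonneg hs.1 ht.1, hstu.le⟩
      ext z
      simp only [mem_setOf_eq]
      constructor
      · rintro ⟨x, hx, y, hy, hxy, rfl⟩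
        exact (h5 s hs t ht x hx y hy hxy).2
      · intro hz
        have hzv : z ∈ Icc (0:K) v := hsub _ hstm hz
        by_cases ht0 : t = 0
        · subst ht0
          exact ⟨z, by simpa using hz, 0, h0, by simpa using hzv.2, by simp⟩
        · obtain ⟨x, hx⟩ := h1 s hs
          have hxz : x < z :=
            hord s hs (s+t) hstm (lt_add_of_pos_right s (lt_of_le_of_ne ht.1 (Ne.symm ht0)))
              x hx z hz
          have hzx : z - x ∈ Icc (0:K) v :=
            ⟨sub_nonneg.2 hxz.le, le_trans (sub_le_self z (hsub s hs hx).1) hzv.2⟩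
          obtain ⟨r, hr, hzr⟩ := hcov _ hzx
          have hzeq : x + (z - x) = z := by abel
          have hsum : x + (z - x) ≤ v := by rw [hzeq]; exact hzv.2
          have h5' := h5 s hs r hr x hx (z - x) hzr hsum
          rw [hzeq] at h5'
          have hind : s + t = s + r :=
            hdisj _ hstm _ ⟨add_nonneg hs.1 hr.1, h5'.1⟩ z hz h5'.2
          have hrt : r = t := (add_left_cancel hind).symm
          exact ⟨x, hx, z - x, hrt ▸ hzr, hsum, hzeq⟩
    · intro s hs t ht hgt x hx y hy hle
      exact absurd (h5 s hs t ht x hx y hy hle).1 hgt.not_ge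
end

section
/- Let (K, v) and (H, u) be Abelian unital po-groups and let (E_t : t ∈ [0,u]_H) be an ordered and directed (H, u)-decomposition of E = Γ(K, v). Then for all x, y ∈ E: x ∼_{E_0} y if and only if x and y lie in the same member E_t of the decomposition. Consequently, the map sending the ∼_{E_0}-class of x to the unique t with x ∈ E_t is a well-defined isomorphism of the quotient effect algebra E/E_0 onto Γ(H, u). -/
open Set

/-- For an ordered and directed `(H, u)`-decomposition of `E = Γ(K, v)`,
`x ∼_{E_0} y` iff `x, y` lie in the same member of the decomposition, and the map
sending the class of `x` to the unique `t` with `x ∈ E_t` is a well-defined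
isomorphism of `E/E_0` onto `Γ(H, u)`. -/
theorem quotient_by_zero_part_iso {K H : Type*}
    [AddCommGroup K] [PartialOrder K] [IsOrderedAddMonoid K] [AddCommGroup H] [PartialOrder H] [IsOrderedAddMonoid H]
    (v : K) (u : H) (hv : IsStrongUnit v) (hu : IsStrongUnit u)
    (E : H → Set K) (hE : IsOrderedDecomp v u E) (hE' : IsDirectedDecomp v u E) :
    (∀ x ∈ Icc (0 : K) v, ∀ y ∈ Icc (0 : K) v,
      (SimI (E 0) x y ↔ ∃ t ∈ Icc (0 : H) u, x ∈ E t ∧ y ∈ E t)) ∧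
    ∃ φ : K → H, (∀ t ∈ Icc (0 : H) u, ∀ x ∈ E t, φ x = t) ∧
      QuotIsoWitness v (E 0) u φ := by
    classical
  obtain ⟨hdec, hord⟩ := hE
  obtain ⟨_, hdir⟩ := hE'
  obtain ⟨hne, hdisj, hunion, hcompl, hadd⟩ := hdec
  have h0u : (0 : H) ∈ Icc (0 : H) u := ⟨le_refl _, hu.1⟩
  have hmemU : ∀ x : K, x ∈ Icc (0 : K) v ↔ ∃ t ∈ Icc (0 : H) u, x ∈ E t := by
    intro x
    rw [← hunion]
    simp [Set.mem_iUnion₂]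
  have hsub : ∀ t ∈ Icc (0 : H) u, E t ⊆ Icc (0 : K) v := by
    intro t ht x hx
    rw [hmemU]
    exact ⟨t, ht, hx⟩
  have huniq : ∀ s ∈ Icc (0 : H) u, ∀ t ∈ Icc (0 : H) u, ∀ x : K,
      x ∈ E s → x ∈ E t → s = t := by
    intro s hs t ht x hxs hxt
    by_contra hst
    have := hdisj s hs t ht hst
    exact absurd (this ▸ (⟨hxs, hxt⟩ : x ∈ E s ∩ E t)) (Set.notMem_empty x)
  have h0E : (0 : K) ∈ E 0 := by
    obtain ⟨t, ht, h0t⟩ := (hmemU 0).1 ⟨le_refl _, hv.1⟩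
    obtain ⟨htt, h0tt⟩ := hadd t ht t ht 0 h0t 0 h0t (by simpa using hv.1)
    have htuiv : t + t ∈ Icc (0 : H) u := ⟨add_nonneg ht.1 ht.1, htt⟩
    have : t + t = t := huniq (t + t) htuiv t ht 0 (by simpa using h0tt) h0t
    have ht0 : t = 0 := add_eq_left.mp this
    rwa [ht0] at h0t
  -- membership in a unique class
  let φ : K → H := fun x => if h : ∃ t ∈ Icc (0 : H) u, x ∈ E t then h.choose else 0
  have hφmem : ∀ x ∈ Icc (0 : K) v, φ x ∈ Icc (0 : H) u ∧ x ∈ E (φ x) := by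
    intro x hx
    have h : ∃ t ∈ Icc (0 : H) u, x ∈ E t := (hmemU x).1 hx
    simp only [φ, dif_pos h]
    exact ⟨h.choose_spec.1, h.choose_spec.2⟩
  have hφE : ∀ t ∈ Icc (0 : H) u, ∀ x ∈ E t, φ x = t := by
    intro t ht x hx
    have hxv : x ∈ Icc (0 : K) v := hsub t ht hx
    obtain ⟨h1, h2⟩ := hφmem x hxv
    exact huniq (φ x) h1 t ht x h2 hx
  -- the key equivalence
  have hsim : ∀ x ∈ Icc (0 : K) v, ∀ y ∈ Icc (0 : K) v,
      (SimI (E 0) x y ↔ ∃ t ∈ Icc (0 : H) u, x ∈ E t ∧ y ∈ E t) := by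
    intro x hx y hy
    constructor
    · rintro ⟨e, he, f, hf, hex, hfy, hef⟩
      have heI : e ∈ Icc (0 : K) v := hsub 0 h0u he
      have hfI : f ∈ Icc (0 : K) v := hsub 0 h0u hf
      have hz : x - e ∈ Icc (0 : K) v :=
        ⟨sub_nonneg.2 hex, le_trans (sub_le_self x heI.1) hx.2⟩
      obtain ⟨s, hs, hzs⟩ := (hmemU (x - e)).1 hz
      have hxE : x ∈ E s := by
        obtain ⟨_, h⟩ := hadd s hs 0 h0u (x - e) hzs e he
          (by rw [sub_add_cancel]; exact hx.2)
        rwa [add_zero, sub_add_cancel] at h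
      have hyE : y ∈ E s := by
        obtain ⟨_, h⟩ := hadd s hs 0 h0u (x - e) hzs f hf
          (by rw [hef, sub_add_cancel]; exact hy.2)
        rwa [add_zero, hef, sub_add_cancel] at h
      exact ⟨s, hs, hxE, hyE⟩
    · rintro ⟨t, ht, hxt, hyt⟩
      obtain ⟨z, hzt, hzx, hzy⟩ := (hdir t ht).2 x hxt y hyt
      have hzv : z ∈ Icc (0 : K) v := hsub t ht hzt
      have hein : ∀ w : K, w ∈ Icc (0 : K) v → w ∈ E t → z ≤ w → w - z ∈ E 0 := by
        intro w hwv hwt hzw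
        have hwz : w - z ∈ Icc (0 : K) v :=
          ⟨sub_nonneg.2 hzw, le_trans (sub_le_self w hzv.1) hwv.2⟩
        obtain ⟨s, hs, hes⟩ := (hmemU (w - z)).1 hwz
        obtain ⟨hts, hws⟩ := hadd t ht s hs z hzt (w - z) hes
          (by rw [add_sub_cancel]; exact hwv.2)
        rw [add_sub_cancel] at hws
        have : t + s = t := huniq (t + s) ⟨add_nonneg ht.1 hs.1, hts⟩ t ht w hws hwt
        have hs0 : s = 0 := add_eq_left.mp this
        rwa [hs0] at hes
      exact ⟨x - z, hein x hx hxt hzx, y - z, hein y hy hyt hzy,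
        sub_le_self x hzv.1, sub_le_self y hzv.1, by rw [sub_sub_cancel, sub_sub_cancel]⟩
  have hsimrefl : ∀ x : K, x ∈ Icc (0 : K) v → SimI (E 0) x x := by
    intro x hx
    exact ⟨0, h0E, 0, h0E, hx.1, hx.1, rfl⟩
  -- monotonicity of φ
  have hφmono : ∀ x ∈ Icc (0 : K) v, ∀ y ∈ Icc (0 : K) v, x ≤ y → φ x ≤ φ y := by
    intro x hx y hy hxy
    obtain ⟨hφx, hxE⟩ := hφmem x hx
    obtain ⟨hφy, hyE⟩ := hφmem y hy
    have hr : y - x ∈ Icc (0 : K) v :=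
      ⟨sub_nonneg.2 hxy, le_trans (sub_le_self y hx.1) hy.2⟩
    obtain ⟨r, hrI, hrE⟩ := (hmemU (y - x)).1 hr
    obtain ⟨hle, hmem⟩ := hadd (φ x) hφx r hrI x hxE (y - x) hrE
      (by rw [add_sub_cancel]; exact hy.2)
    rw [add_sub_cancel] at hmem
    have : φ x + r = φ y :=
      huniq (φ x + r) ⟨add_nonneg hφx.1 hrI.1, hle⟩ (φ y) hφy y hmem hyE
    calc φ x ≤ φ x + r := le_add_of_nonneg_right hrI.1
    _ = φ y := this
  refine ⟨hsim, φ, hφE, fun x hx => (hφmem x hx).1, ?_, ?_, ?_, ?_, ?_⟩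
  · -- φ v = u
    have hvv : v ∈ Icc (0 : K) v := ⟨hv.1, le_refl _⟩
    obtain ⟨hφv, hvE⟩ := hφmem v hvv
    have h0mem : (0 : K) ∈ E (u - φ v) := by
      rw [← hcompl (φ v) hφv]
      exact ⟨v, hvE, by simp⟩
    have huv : u - φ v ∈ Icc (0 : H) u :=
      ⟨sub_nonneg.2 hφv.2, sub_le_self u hφv.1⟩
    have : u - φ v = 0 := huniq (u - φ v) huv 0 h0u 0 h0mem h0E
    exact (sub_eq_zero.1 this).symm
  · -- additivity
    intro x hx y hy hxyv
    obtain ⟨hφx, hxE⟩ := hφmem x hx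
    obtain ⟨hφy, hyE⟩ := hφmem y hy
    obtain ⟨hle, hmem⟩ := hadd (φ x) hφx (φ y) hφy x hxE y hyE hxyv
    exact hφE (φ x + φ y) ⟨add_nonneg hφx.1 hφy.1, hle⟩ (x + y) hmem
  · -- surjectivity
    intro t ht
    obtain ⟨x, hx⟩ := hne t ht
    exact ⟨x, hsub t ht hx, hφE t ht x hx⟩
  · -- fibers are SimI classes
    intro x hx y hy
    rw [hsim x hx y hy]
    constructor
    · intro h
      exact ⟨φ x, (hφmem x hx).1, (hφmem x hx).2, h ▸ (hφmem y hy).2⟩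
    · rintro ⟨t, ht, hxt, hyt⟩
      rw [hφE t ht x hxt, hφE t ht y hyt]
  · -- order
    intro x hx y hy
    obtain ⟨hφx, hxE⟩ := hφmem x hx
    obtain ⟨hφy, hyE⟩ := hφmem y hy
    constructor
    · intro hle
      rcases eq_or_lt_of_le hle with heq | hlt
      · -- same class: use downward directedness
        have hyφx : y ∈ E (φ x) := heq ▸ hyE
        obtain ⟨z, hzt, hzx, hzy⟩ := (hdir (φ x) hφx).2 x hxE y hyφx
        have hzv : z ∈ Icc (0 : K) v := hsub (φ x) hφx hzt
        exact ⟨z, hzv, (hsim z hzv x hx).2 ⟨φ x, hφx, hzt, hxE⟩, hzy⟩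
      · have hxy : x < y := hord (φ x) hφx (φ y) hφy hlt x hxE y hyE
        exact ⟨x, hx, hsimrefl x hx, le_of_lt hxy⟩
    · rintro ⟨x₁, hx₁v, hsimx, hx₁y⟩
      have hφeq : φ x₁ = φ x := by
        obtain ⟨t, ht, hx₁t, hxt⟩ := (hsim x₁ hx₁v x hx).1 hsimx
        rw [hφE t ht x₁ hx₁t, hφE t ht x hxt]
      rw [← hφeq]
      exact hφmono x₁ hx₁v y hy hx₁y
end

section
/- Let (H, u) be an Abelian unital po-group with RDP and G a directed Abelian po-group with RDP, and set E = Γ(H ×ₗ G, (u, 0)). Then E has exactly one state if and only if Γ(H, u) has exactly one state. In that case, if s_H is the unique state on Γ(H, u), then the unique state on E is given by s₀(h, g) = s_H(h). -/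
open Set

section MyAux
variable {H G : Type*} [AddCommGroup H] [PartialOrder H] [IsOrderedAddMonoid H] [AddCommGroup G] [PartialOrder G] [IsOrderedAddMonoid G]

lemma my_lex_le {a c : H} {b d : G} :
    toLex (a,b) ≤ toLex (c,d) ↔ a < c ∨ (a = c ∧ b ≤ d) := Prod.Lex.le_iff

lemma my_mem_Icc_lex {u : H} {p : H ×ₗ G} (hp : p ∈ Icc (0 : H ×ₗ G) (toLex (u,(0:G)))) :
    (ofLex p).1 ∈ Icc (0:H) u := by
  obtain ⟨h1, h2⟩ := hp
  have h1' : toLex ((0:H),(0:G)) ≤ toLex ((ofLex p).1, (ofLex p).2) := h1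
  have h2' : toLex ((ofLex p).1, (ofLex p).2) ≤ toLex (u,(0:G)) := h2
  rw [my_lex_le] at h1' h2'
  constructor
  · rcases h1' with h | ⟨h, _⟩
    · exact h.le
    · exact h.le
  · rcases h2' with h | ⟨h, _⟩
    · exact h.le
    · exact h.le

lemma my_sect_mem {u : H} {h : H} (hh : h ∈ Icc (0:H) u) :
    toLex (h, (0:G)) ∈ Icc (0 : H ×ₗ G) (toLex (u,(0:G))) := by
  constructor
  · show toLex ((0:H),(0:G)) ≤ _
    rw [my_lex_le]
    rcases eq_or_lt_of_le hh.1 with h' | h'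
    · exact Or.inr ⟨h'.symm ▸ rfl, le_refl _⟩
    · exact Or.inl h'
  · rw [my_lex_le]
    rcases eq_or_lt_of_le hh.2 with h' | h'
    · exact Or.inr ⟨h', le_refl _⟩
    · exact Or.inl h'

lemma my_state_zero {K : Type*} [AddCommGroup K] [PartialOrder K] [IsOrderedAddMonoid K] {v : K} (hv : 0 ≤ v) {s : K → ℝ}
    (hs : IsState v s) : s 0 = 0 := by
  have h0 : (0:K) ∈ Icc (0:K) v := ⟨le_refl _, hv⟩
  have := hs.2.2 0 h0 0 h0 (by simpa using hv)
  simp at this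
  linarith

lemma my_zero_lt_u {u : H} (hu : 0 ≤ u) {s : H → ℝ} (hs : IsState u s) : 0 < u := by
  rcases eq_or_lt_of_le hu with h | h
  · exfalso
    have h0 := my_state_zero hu hs
    have h1 := hs.2.1
    rw [← h] at h1
    linarith
  · exact h

/-- The section `h ↦ s (h, 0)` of a state on the lex product is a state. -/
lemma my_state_sect {u : H} {s : H ×ₗ G → ℝ} (hs : IsState (toLex (u,(0:G))) s) :
    IsState u (fun h => s (toLex (h, (0:G)))) := by
  refine ⟨fun x hx => hs.1 _ (my_sect_mem hx), hs.2.1, fun x hx y hy hxy => ?_⟩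
  have := hs.2.2 (toLex (x,(0:G))) (my_sect_mem hx) (toLex (y,(0:G))) (my_sect_mem hy) ?_
  · have e : toLex (x,(0:G)) + toLex (y,(0:G)) = toLex (x+y, (0:G)) := by
      show toLex (x+y, (0:G)+(0:G)) = _
      rw [add_zero]
    rw [e] at this
    exact this
  · show toLex (x+y, (0:G)+(0:G)) ≤ toLex (u, (0:G))
    rw [add_zero, my_lex_le]
    rcases eq_or_lt_of_le hxy with h' | h'
    · exact Or.inr ⟨h', le_refl _⟩
    · exact Or.inl h'

/-- The pullback of a state on `Γ(H,u)` along the first projection is a state. -/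
lemma my_state_pull {u : H} {sH : H → ℝ} (hs : IsState u sH) :
    IsState (toLex (u,(0:G))) (fun p : H ×ₗ G => sH (ofLex p).1) := by
  refine ⟨fun x hx => hs.1 _ (my_mem_Icc_lex hx), hs.2.1, fun x hx y hy hxy => ?_⟩
  have hsum : (ofLex (x+y)).1 = (ofLex x).1 + (ofLex y).1 := rfl
  show sH ((ofLex x).1 + (ofLex y).1) = _
  refine hs.2.2 _ (my_mem_Icc_lex hx) _ (my_mem_Icc_lex hy) ?_
  have : toLex ((ofLex x).1 + (ofLex y).1, (ofLex x).2 + (ofLex y).2) ≤ toLex (u, (0:G)) := hxy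
  rw [my_lex_le] at this
  rcases this with h | ⟨h, _⟩
  · exact h.le
  · exact h.le

lemma my_state_infin {u : H} (hu0 : 0 < u) {s : H ×ₗ G → ℝ}
    (hs : IsState (toLex (u,(0:G))) s) {g : G} (hg : 0 ≤ g) : s (toLex ((0:H), g)) = 0 := by
  have hmem : ∀ g' : G, 0 ≤ g' → toLex ((0:H), g') ∈ Icc (0 : H ×ₗ G) (toLex (u,(0:G))) := by
    intro g' hg'
    constructor
    · show toLex ((0:H),(0:G)) ≤ _
      rw [my_lex_le]; exact Or.inr ⟨rfl, hg'⟩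
    · rw [my_lex_le]; exact Or.inl hu0
  have key : ∀ n : ℕ, s (toLex ((0:H), (n:ℕ) • g)) = n * s (toLex ((0:H), g)) := by
    intro n
    induction n with
    | zero =>
      simp only [zero_smul, Nat.cast_zero, zero_mul]
      have hv : (0 : H ×ₗ G) ≤ toLex (u,(0:G)) := (hmem 0 le_rfl).2
      exact my_state_zero hv hs
    | succ n ih =>
      have e : toLex ((0:H), (n+1) • g) = toLex ((0:H), n • g) + toLex ((0:H), g) := by
        show _ = toLex ((0:H)+(0:H), n • g + g)
        rw [add_zero, succ_nsmul]
      rw [e, hs.2.2 _ (hmem _ (nsmul_nonneg hg n)) _ (hmem _ hg) (by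
        show toLex ((0:H)+(0:H), n • g + g) ≤ toLex (u,(0:G))
        rw [add_zero, my_lex_le]; exact Or.inl hu0), ih]
      push_cast; ring
  have hb : ∀ n : ℕ, (n : ℝ) * s (toLex ((0:H), g)) ≤ 1 := by
    intro n
    rw [← key n]
    exact (hs.1 _ (hmem _ (nsmul_nonneg hg n))).2
  have hnn : 0 ≤ s (toLex ((0:H), g)) := (hs.1 _ (hmem _ hg)).1
  by_contra hne
  have hpos : 0 < s (toLex ((0:H), g)) := lt_of_le_of_ne hnn (Ne.symm hne)
  obtain ⟨n, hn⟩ := exists_nat_gt (1 / s (toLex ((0:H), g)))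
  have := hb n
  rw [div_lt_iff₀ hpos] at hn
  linarith

lemma my_state_eq_sect {u : H} (hu0 : 0 < u) (hG : IsDirectedGroup G) {s : H ×ₗ G → ℝ}
    (hs : IsState (toLex (u,(0:G))) s) {p : H ×ₗ G}
    (hp : p ∈ Icc (0 : H ×ₗ G) (toLex (u,(0:G)))) :
    s p = s (toLex ((ofLex p).1, (0:G))) := by
  set h := (ofLex p).1
  set g := (ofLex p).2
  have hpe : p = toLex (h, g) := rfl
  have hh : h ∈ Icc (0:H) u := my_mem_Icc_lex hp
  -- infinitesimal membership
  have hmem0 : ∀ g' : G, 0 ≤ g' → toLex ((0:H), g') ∈ Icc (0 : H ×ₗ G) (toLex (u,(0:G))) := by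
    intro g' hg'
    exact ⟨by show toLex ((0:H),(0:G)) ≤ _; rw [my_lex_le]; exact Or.inr ⟨rfl, hg'⟩,
      by rw [my_lex_le]; exact Or.inl hu0⟩
  by_cases hg0 : 0 ≤ g
  · -- p = (h,0) + (0,g) ≤ (u,0)? requires p ≤ (u,0) ✓
    have e : p = toLex (h, (0:G)) + toLex ((0:H), g) := by
      rw [hpe]; show toLex (h, g) = toLex (h + 0, 0 + g); rw [add_zero, zero_add]
    rw [e, hs.2.2 _ (my_sect_mem hh) _ (hmem0 g hg0) (by rw [← e]; exact hp.2),
      my_state_infin hu0 hs hg0, add_zero]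
  · by_cases hg1 : g ≤ 0
    · -- (h,0) = p + (0,-g)
      have e : toLex (h, (0:G)) = p + toLex ((0:H), -g) := by
        rw [hpe]; show toLex (h, (0:G)) = toLex (h + 0, g + -g); rw [add_zero, add_neg_cancel]
      rw [e, hs.2.2 _ hp _ (hmem0 (-g) (neg_nonneg.mpr hg1)) (by
          rw [← e]; exact (my_sect_mem hh).2),
        my_state_infin hu0 hs (neg_nonneg.mpr hg1), add_zero]
    · -- g incomparable with 0; then 0 < h < u
      have hne0 : h ≠ 0 := by
        intro hc
        have h1 : toLex ((0:H),(0:G)) ≤ toLex (h, g) := hp.1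
        rw [my_lex_le] at h1
        rcases h1 with h' | ⟨_, h'⟩
        · exact absurd hc (ne_of_gt h')
        · exact hg0 h'
      have hneu : h ≠ u := by
        intro hc
        have h2 : toLex (h, g) ≤ toLex (u, (0:G)) := hp.2
        rw [my_lex_le] at h2
        rcases h2 with h' | ⟨_, h'⟩
        · exact absurd hc (ne_of_lt h')
        · exact hg1 h'
      have hlt : h < u := lt_of_le_of_ne hh.2 hneu
      obtain ⟨c, hgc, h0c⟩ := hG g 0
      -- s(h,c) = s(h,g) + s(0,c-g) and s(h,c) = s(h,0) + s(0,c)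
      have hmemhc : toLex (h, c) ∈ Icc (0 : H ×ₗ G) (toLex (u,(0:G))) := by
        constructor
        · show toLex ((0:H),(0:G)) ≤ _
          rw [my_lex_le]; exact Or.inl (lt_of_le_of_ne hh.1 (Ne.symm hne0))
        · rw [my_lex_le]; exact Or.inl hlt
      have e1 : toLex (h, c) = toLex (h, g) + toLex ((0:H), c - g) := by
        show toLex (h, c) = toLex (h + 0, g + (c - g)); rw [add_zero, add_sub_cancel]
      have e2 : toLex (h, c) = toLex (h, (0:G)) + toLex ((0:H), c) := by
        show toLex (h, c) = toLex (h + 0, 0 + c); rw [add_zero, zero_add]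
      have s1 : s (toLex (h, c)) = s p := by
        rw [hpe, e1, hs.2.2 _ (hpe ▸ hp) _ (hmem0 _ (sub_nonneg.mpr hgc)) (by
            rw [← e1]; exact hmemhc.2),
          my_state_infin hu0 hs (sub_nonneg.mpr hgc), add_zero]
      have s2 : s (toLex (h, c)) = s (toLex (h, (0:G))) := by
        rw [e2, hs.2.2 _ (my_sect_mem hh) _ (hmem0 _ h0c) (by rw [← e2]; exact hmemhc.2),
          my_state_infin hu0 hs h0c, add_zero]
      rw [← s1, s2]

end MyAux

/-- `E = Γ(H ×ₗ G, (u, 0))` has a unique state iff `Γ(H, u)` has a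
unique state; in that case, if `s_H` is the unique state on `Γ(H, u)`, the unique
state on `E` is `s₀(h, g) = s_H(h)`. -/
theorem uniqueState_lex_iff {H G : Type*} [AddCommGroup H] [PartialOrder H] [IsOrderedAddMonoid H] [AddCommGroup G] [PartialOrder G] [IsOrderedAddMonoid G]
    (u : H) (hu : IsStrongUnit u) (hH : RDP H) (hG : IsDirectedGroup G) (hRG : RDP G) :
    (HasUniqueState (toLex (u, (0 : G))) ↔ HasUniqueState u) ∧
    (∀ sH : H → ℝ, IsState u sH → HasUniqueState u →
      IsState (toLex (u, (0 : G))) (fun p : H ×ₗ G => sH (ofLex p).1) ∧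
      ∀ s : H ×ₗ G → ℝ, IsState (toLex (u, (0 : G))) s →
        ∀ p ∈ Icc (0 : H ×ₗ G) (toLex (u, (0 : G))), s p = sH (ofLex p).1) := by
  constructor
  · constructor
    · rintro ⟨⟨s, hs⟩, huniq⟩
      refine ⟨⟨fun h => s (toLex (h, (0:G))), my_state_sect hs⟩, ?_⟩
      intro t t' ht ht' x hx
      have := huniq _ _ (my_state_pull ht) (my_state_pull ht') (toLex (x, (0:G)))
        (my_sect_mem hx)
      exact this
    · rintro ⟨⟨sH, hsH⟩, huniq⟩
      have hu0 : 0 < u := my_zero_lt_u hu.1 hsH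
      refine ⟨⟨fun p : H ×ₗ G => sH (ofLex p).1, my_state_pull hsH⟩, ?_⟩
      intro s s' hs hs' p hp
      rw [my_state_eq_sect hu0 hG hs hp, my_state_eq_sect hu0 hG hs' hp]
      exact huniq _ _ (my_state_sect hs) (my_state_sect hs') _ (my_mem_Icc_lex hp)
  · intro sH hsH huniq
    have hu0 : 0 < u := my_zero_lt_u hu.1 hsH
    refine ⟨my_state_pull hsH, ?_⟩
    intro s hs p hp
    rw [my_state_eq_sect hu0 hG hs hp]
    exact huniq.2 _ _ (my_state_sect hs) hsH _ (my_mem_Icc_lex hp)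
end

section
/- Let (H, u) be an Abelian unital po-group with RDP and G a directed Abelian po-group with RDP, and set E = Γ(H ×ₗ G, (u, 0)). Then every state s on E satisfies s(h, g) = s(h, 0) for all (h, g) ∈ E, and the map sending a state s on E to the state h ↦ s(h, 0) on Γ(H, u) is a bijection between the set of states on E and the set of states on Γ(H, u). -/
open Set

/-- Every state `s` on `E = Γ(H ×ₗ G, (u, 0))` satisfies
`s(h, g) = s(h, 0)`, and `s ↦ (h ↦ s(h, 0))` is a bijection between the states on `E`
and the states on `Γ(H, u)`. -/
theorem states_lex_correspondence {H G : Type*} [AddCommGroup H] [PartialOrder H] [IsOrderedAddMonoid H] [AddCommGroup G] [PartialOrder G] [IsOrderedAddMonoid G]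
    (u : H) (hu : IsStrongUnit u) (hH : RDP H) (hG : IsDirectedGroup G) (hRG : RDP G) :
    (∀ s : H ×ₗ G → ℝ, IsState (toLex (u, (0 : G))) s →
      ∀ p ∈ Icc (0 : H ×ₗ G) (toLex (u, (0 : G))),
        s p = s (toLex ((ofLex p).1, (0 : G)))) ∧
    (∀ s : H ×ₗ G → ℝ, IsState (toLex (u, (0 : G))) s →
      IsState u (fun h : H => s (toLex (h, (0 : G))))) ∧
    (∀ s s' : H ×ₗ G → ℝ, IsState (toLex (u, (0 : G))) s →
      IsState (toLex (u, (0 : G))) s' →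
      (∀ h ∈ Icc (0 : H) u, s (toLex (h, (0 : G))) = s' (toLex (h, (0 : G)))) →
      ∀ p ∈ Icc (0 : H ×ₗ G) (toLex (u, (0 : G))), s p = s' p) ∧
    (∀ sH : H → ℝ, IsState u sH → ∃ s : H ×ₗ G → ℝ,
      IsState (toLex (u, (0 : G))) s ∧
      ∀ h ∈ Icc (0 : H) u, s (toLex (h, (0 : G))) = sH h) := by
  classical
  set v : H ×ₗ G := toLex (u, (0 : G)) with hv
  have addlex : ∀ (a c : H) (b d : G),
      toLex (a, b) + toLex (c, d) = toLex (a + c, b + d) := fun _ _ _ _ => rfl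
  have zerolex : (0 : H ×ₗ G) = toLex ((0 : H), (0 : G)) := rfl
  have lexle : ∀ (a c : H) (b d : G),
      toLex (a, b) ≤ toLex (c, d) ↔ a < c ∨ a = c ∧ b ≤ d := fun a c b d =>
    Prod.Lex.le_iff (x := toLex (a, b)) (y := toLex (c, d))
  have hzero_v : (0 : H ×ₗ G) ≤ v := by
    rw [hv, zerolex, lexle]
    rcases lt_or_eq_of_le hu.1 with h | h
    · exact Or.inl h
    · exact Or.inr ⟨h, le_refl _⟩
  have h00 : (0 : H ×ₗ G) ∈ Icc (0 : H ×ₗ G) v := ⟨le_refl _, hzero_v⟩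
  have hs0 : ∀ s : H ×ₗ G → ℝ, IsState v s → s 0 = 0 := by
    intro s hs
    have h2 := hs.2.2 0 h00 0 h00 (by rw [add_zero]; exact hzero_v)
    rw [add_zero] at h2
    linarith
  have hupos : ∀ s : H ×ₗ G → ℝ, IsState v s → 0 < u := by
    intro s hs
    rcases lt_or_eq_of_le hu.1 with h | h
    · exact h
    · exfalso
      have hv0 : v = 0 := by rw [hv, zerolex, ← h]
      have h1 := hs.2.1
      rw [hv0, hs0 s hs] at h1
      norm_num at h1
  -- membership of pure-H elements
  have hmemH : ∀ h : H, 0 ≤ h → h ≤ u → toLex (h, (0 : G)) ∈ Icc (0 : H ×ₗ G) v := by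
    intro h h0 h1
    constructor
    · rw [zerolex, lexle]
      rcases lt_or_eq_of_le h0 with h' | h'
      · exact Or.inl h'
      · exact Or.inr ⟨h', le_refl _⟩
    · rw [hv, lexle]
      rcases lt_or_eq_of_le h1 with h' | h'
      · exact Or.inl h'
      · exact Or.inr ⟨h', le_refl _⟩
  have hfst : ∀ p ∈ Icc (0 : H ×ₗ G) v, (ofLex p).1 ∈ Icc (0 : H) u := by
    intro p hp
    have h1 := (Prod.Lex.le_iff (x := toLex ((0 : H), (0 : G))) (y := p)).mp hp.1
    have h2 := (Prod.Lex.le_iff (x := p) (y := toLex (u, (0 : G)))).mp hp.2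
    constructor
    · rcases h1 with h | ⟨h, _⟩
      · exact le_of_lt h
      · exact le_of_eq h
    · rcases h2 with h | ⟨h, _⟩
      · exact le_of_lt h
      · exact le_of_eq h
  -- infinitesimals have state zero
  have hinfin : ∀ s : H ×ₗ G → ℝ, IsState v s → ∀ g : G, 0 ≤ g →
      s (toLex ((0 : H), g)) = 0 := by
    intro s hs g hg
    have hu' : 0 < u := hupos s hs
    have hmem : ∀ g' : G, 0 ≤ g' → toLex ((0 : H), g') ∈ Icc (0 : H ×ₗ G) v := by
      intro g' hg'
      exact ⟨by rw [zerolex, lexle]; exact Or.inr ⟨rfl, hg'⟩,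
        by rw [hv, lexle]; exact Or.inl hu'⟩
    have hadd : ∀ n : ℕ, s (toLex ((0 : H), n • g)) = n * s (toLex ((0 : H), g)) := by
      intro n
      induction n with
      | zero =>
        have : toLex ((0 : H), (0 : ℕ) • g) = (0 : H ×ₗ G) := by
          rw [zero_nsmul, zerolex]
        rw [this, hs0 s hs]
        simp
      | succ n ih =>
        have hsum : toLex ((0 : H), n • g) + toLex ((0 : H), g)
            = toLex ((0 : H), (n + 1) • g) := by
          rw [addlex, add_zero, ← succ_nsmul g n]
        have hle : toLex ((0 : H), n • g) + toLex ((0 : H), g) ≤ v := by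
          rw [hsum, hv, lexle]
          exact Or.inl hu'
        have h1 := hs.2.2 (toLex ((0 : H), n • g)) (hmem _ (nsmul_nonneg hg n))
          (toLex ((0 : H), g)) (hmem _ hg) hle
        rw [hsum] at h1
        rw [h1, ih]
        push_cast
        ring
    have hbd : ∀ n : ℕ, (n : ℝ) * s (toLex ((0 : H), g)) ≤ 1 := by
      intro n
      have := (hs.1 _ (hmem _ (nsmul_nonneg hg n))).2
      rwa [hadd n] at this
    have hnn : 0 ≤ s (toLex ((0 : H), g)) := (hs.1 _ (hmem g hg)).1
    by_contra hne
    have hpos : 0 < s (toLex ((0 : H), g)) := lt_of_le_of_ne hnn (Ne.symm hne)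
    obtain ⟨n, hn⟩ := exists_nat_gt (1 / s (toLex ((0 : H), g)))
    have := hbd n
    rw [div_lt_iff₀ hpos] at hn
    linarith
  -- the key lemma
  have key : ∀ s : H ×ₗ G → ℝ, IsState v s → ∀ p ∈ Icc (0 : H ×ₗ G) v,
      s p = s (toLex ((ofLex p).1, (0 : G))) := by
    intro s hs p hp
    have hu' : 0 < u := hupos s hs
    set h : H := (ofLex p).1 with hh
    set g : G := (ofLex p).2 with hg
    have hpe : p = toLex (h, g) := rfl
    have h1 : 0 < h ∨ 0 = h ∧ 0 ≤ g :=
      (Prod.Lex.le_iff (x := toLex ((0 : H), (0 : G))) (y := p)).mp hp.1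
    have h2 : h < u ∨ h = u ∧ g ≤ 0 :=
      (Prod.Lex.le_iff (x := p) (y := toLex (u, (0 : G)))).mp hp.2
    have hmem0 : ∀ g' : G, 0 ≤ g' → toLex ((0 : H), g') ∈ Icc (0 : H ×ₗ G) v := by
      intro g' hg'
      exact ⟨by rw [zerolex, lexle]; exact Or.inr ⟨rfl, hg'⟩,
        by rw [hv, lexle]; exact Or.inl hu'⟩
    rcases h1 with hA | ⟨hA, hA2⟩
    · -- 0 < h
      rcases h2 with hB | ⟨hB, hB2⟩
      · -- h < u : use directedness of G
        obtain ⟨c, hc0, hcg⟩ := hG 0 (-g)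
        have hgc : 0 ≤ g + c := by
          have := add_le_add_right hcg g
          rwa [add_neg_cancel] at this
        have hsum1 : toLex (h, g) + toLex ((0 : H), c) = toLex (h, g + c) := by
          rw [addlex, add_zero]
        have hle1 : toLex (h, g) + toLex ((0 : H), c) ≤ v := by
          rw [hsum1, hv, lexle]; exact Or.inl hB
        have e1 := hs.2.2 (toLex (h, g)) (hpe ▸ hp) (toLex ((0 : H), c)) (hmem0 c hc0) hle1
        rw [hsum1, hinfin s hs c hc0, add_zero] at e1
        have hsum2 : toLex (h, (0 : G)) + toLex ((0 : H), g + c) = toLex (h, g + c) := by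
          rw [addlex, add_zero, zero_add]
        have hle2 : toLex (h, (0 : G)) + toLex ((0 : H), g + c) ≤ v := by
          rw [hsum2, hv, lexle]; exact Or.inl hB
        have e2 := hs.2.2 (toLex (h, (0 : G))) (hmemH h (le_of_lt hA) (le_of_lt hB))
          (toLex ((0 : H), g + c)) (hmem0 _ hgc) hle2
        rw [hsum2, hinfin s hs _ hgc, add_zero] at e2
        rw [hpe, ← e1, ← e2]
      · -- h = u, g ≤ 0
        have hng : 0 ≤ -g := neg_nonneg.mpr hB2
        have hsum : toLex (h, g) + toLex ((0 : H), -g) = v := by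
          rw [addlex, add_zero, add_neg_cancel, hv, hB]
        have hle : toLex (h, g) + toLex ((0 : H), -g) ≤ v := le_of_eq hsum
        have e1 := hs.2.2 (toLex (h, g)) (hpe ▸ hp) (toLex ((0 : H), -g)) (hmem0 _ hng) hle
        rw [hsum, hs.2.1, hinfin s hs _ hng, add_zero] at e1
        have e2 : s (toLex (h, (0 : G))) = 1 := by rw [hB, ← hv, hs.2.1]
        rw [hpe, ← e1, e2]
    · -- h = 0, g ≥ 0
      have e1 : s p = 0 := by
        rw [hpe, ← hA]
        exact hinfin s hs g hA2
      have e2 : s (toLex (h, (0 : G))) = 0 := by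
        rw [← hA, ← zerolex]
        exact hs0 s hs
      rw [e1, e2]
  refine ⟨key, ?_, ?_, ?_⟩
  · -- part 2: induced map is a state on Γ(H, u)
    intro s hs
    refine ⟨?_, ?_, ?_⟩
    · intro h hh
      exact hs.1 _ (hmemH h hh.1 hh.2)
    · exact hs.2.1
    · intro x hx y hy hxy
      have hsum : toLex (x, (0 : G)) + toLex (y, (0 : G)) = toLex (x + y, (0 : G)) := by
        rw [addlex, add_zero]
      have hle : toLex (x, (0 : G)) + toLex (y, (0 : G)) ≤ v := by
        rw [hsum, hv, lexle]
        rcases lt_or_eq_of_le hxy with h' | h'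
        · exact Or.inl h'
        · exact Or.inr ⟨h', le_refl _⟩
      have := hs.2.2 _ (hmemH x hx.1 hx.2) _ (hmemH y hy.1 hy.2) hle
      rw [hsum] at this
      exact this
  · -- part 3: injectivity
    intro s s' hs hs' hagree p hp
    rw [key s hs p hp, key s' hs' p hp, hagree _ (hfst p hp)]
  · -- part 4: surjectivity
    intro sH hsH
    refine ⟨fun p => sH (ofLex p).1, ⟨?_, ?_, ?_⟩, ?_⟩
    · intro p hp
      exact hsH.1 _ (hfst p hp)
    · exact hsH.2.1
    · intro x hx y hy hxy
      have hxy' : (ofLex x).1 + (ofLex y).1 ≤ u := by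
        have := (Prod.Lex.le_iff (x := x + y) (y := toLex (u, (0 : G)))).mp hxy
        rcases this with h | ⟨h, _⟩
        · exact le_of_lt h
        · exact le_of_eq h
      exact hsH.2.2 _ (hfst x hx) _ (hfst y hy) hxy'
    · intro h _
      rfl
end
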